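/- Let (S,·) be a semigroup such that there exists a non-principal idempotent ultrafilter e on S, let k, r ≥ 1, and let [S]^k = A_1 ∪ … ∪ A_r. Then there exist i ∈ {1,…,r} and a tree T ⊆ S^{<ω} such that for all f ∈ T and all α_1 < α_2 < … < α_k ⊆ dom f with each α_j ∈ P_f(ω), one has: (1) T(f) ∈ e, and (2) {∏_{t∈α_1} f(t), ∏_{t∈α_2} f(t), …, ∏_{t∈α_k} f(t)} ∈ A_i. -/

import Mathlib

set_option linter.unusedSectionVars false


/- The semigroup structure on `βS = Ultrafilter S`, with
`A ∈ p * q ↔ {s | {t | s * t ∈ A} ∈ q} ∈ p`. -/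
attribute [local instance] Ultrafilter.mul Ultrafilter.semigroup

/-- The ordered product of a `Monoid`-valued function over a finite set of
natural-number indices, the factors being taken in increasing order of the indices. -/
def oListProd {M : Type*} [Monoid M] (f : ℕ → M) (α : Finset ℕ) : M :=
  ((α.sort (· ≤ ·)).map f).prod

/-- A finite sequence in `S` is a list; a nonempty `T ⊆ S^{<ω}` is a tree iff it is
closed under restrictions, i.e. under taking prefixes. -/
def IsTree {S : Type*} (T : Set (List S)) : Prop :=
  T.Nonempty ∧ ∀ g ∈ T, ∀ f : List S, f <+: g → f ∈ T

/-- `T(f) = {s ∈ S : f⌢s ∈ T}`. -/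
def treeSucc {S : Type*} (T : Set (List S)) (f : List S) : Set S :=
  {s | f ++ [s] ∈ T}

/-- The ordered product `∏_{t ∈ α} f(t)` of entries of the finite sequence `f`,
taken in increasing order of indices and computed in `WithOne S` (indices outside the
domain of `f` contribute the unit; in all uses `α ⊆ dom f`). -/
def lProd {S : Type*} [Semigroup S] (f : List S) (α : Finset ℕ) : WithOne S :=
  oListProd (fun t => (f[t]?.elim (1 : WithOne S) (fun s => (s : WithOne S)))) α

namespace TRaux

variable {S : Type*} [Semigroup S] [DecidableEq S]

/-- The star set of `V` with respect to `e`. -/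
def star (e : Ultrafilter S) (V : Set S) : Set S := {s | s ∈ V ∧ {t | s * t ∈ V} ∈ e}

theorem star_subset (e : Ultrafilter S) (V : Set S) : star e V ⊆ V := fun _ h => h.1

theorem star_mem (e : Ultrafilter S) (hid : e * e = e) {V : Set S} (hV : V ∈ e) :
    star e V ∈ e := by
  have h2 : {s | {t | s * t ∈ V} ∈ e} ∈ e := by
    have h : V ∈ e * e := by rw [hid]; exact hV
    have := (Ultrafilter.eventually_mul e e (· ∈ V)).mp h
    exact this
  have : star e V = V ∩ {s | {t | s * t ∈ V} ∈ e} := rfl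
  rw [this]; exact Filter.inter_mem hV h2

theorem mem_star_star (e : Ultrafilter S) (hid : e * e = e) {V : Set S} {s : S}
    (h : s ∈ star e V) : {t | s * t ∈ star e V} ∈ e := by
  have h2 : star e {t | s * t ∈ V} ∈ e := star_mem e hid h.2
  apply Filter.mem_of_superset h2
  intro t ht
  refine ⟨ht.1, ?_⟩
  have := ht.2
  simp only [Set.mem_setOf_eq, mul_assoc] at this ⊢
  exact this

variable {r : ℕ} (e : Ultrafilter S) (A : Fin r → Set (Finset S))

/-- Sets of colors, by downward recursion; lists are in reverse chronological order. -/
def CC : ℕ → List S → Set (Fin r)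
  | 0, l => {i | l.Nodup ∧ l.toFinset ∈ A i}
  | (n+1), l => {i | {s | i ∈ CC n (s :: l)} ∈ e}

theorem not_mem_list_mem (hnp : ∀ s : S, e ≠ pure s) (l : List S) : {s | s ∉ l} ∈ e := by
  induction l with
  | nil => exact Filter.univ_mem' (by simp)
  | cons a l ih =>
    have ha : {a}ᶜ ∈ e := by
      rw [Ultrafilter.compl_mem_iff_notMem]
      intro h
      exact hnp a (Ultrafilter.coe_injective (e.neBot.eq_pure_iff.mpr h))
    have := Filter.inter_mem ha ih
    apply Filter.mem_of_superset this
    intro s hs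
    simp only [Set.mem_setOf_eq, List.mem_cons, not_or]
    exact ⟨hs.1, hs.2⟩

theorem CC_nonempty {k : ℕ} (hA : {E : Finset S | E.card = k} = ⋃ i, A i)
    (hnp : ∀ s : S, e ≠ pure s) :
    ∀ (n : ℕ) (l : List S), l.Nodup → l.length + n = k → (CC e A n l).Nonempty := by
  intro n
  induction n with
  | zero =>
    intro l hnd hlen
    have hcard : l.toFinset.card = k := by
      rw [List.toFinset_card_of_nodup hnd]; omega
    have : l.toFinset ∈ ⋃ i, A i := by rw [← hA]; exact hcard
    obtain ⟨_, ⟨i, rfl⟩, hi⟩ := this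
    exact ⟨i, hnd, hi⟩
  | succ n ih =>
    intro l hnd hlen
    have h1 : {s : S | s ∉ l} ∈ e := not_mem_list_mem e hnp l
    have h2 : (⋃ i : Fin r, {s | i ∈ CC e A n (s :: l)}) ∈ e := by
      apply Filter.mem_of_superset h1
      intro s hs
      obtain ⟨i, hi⟩ := ih (s :: l) (List.nodup_cons.mpr ⟨hs, hnd⟩) (by simp at hlen ⊢; omega)
      exact Set.mem_iUnion.mpr ⟨i, hi⟩
    have h3 : (⋃ i ∈ (Set.univ : Set (Fin r)), {s | i ∈ CC e A n (s :: l)}) ∈ e := by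
      simpa using h2
    obtain ⟨i, _, hi⟩ := (Ultrafilter.finite_biUnion_mem_iff Set.finite_univ).mp h3
    exact ⟨i, hi⟩

variable (k : ℕ) (i : Fin r)

def Vset (q : List S) : Set S := {s | i ∈ CC e A (k - q.length - 1) (s :: q)}

def GoodChain : List S → Prop
  | [] => True
  | x :: rest => GoodChain rest ∧ rest.length < k ∧ x ∈ star e (Vset e A k i rest)

theorem CC_of_goodChain (hi : i ∈ CC e A k []) :
    ∀ q : List S, GoodChain e A k i q → i ∈ CC e A (k - q.length) q := by
  intro q hq
  cases q with
  | nil => simpa using hi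
  | cons x rest =>
    have hx : x ∈ Vset e A k i rest := star_subset e _ hq.2.2
    have : i ∈ CC e A (k - rest.length - 1) (x :: rest) := hx
    simpa [Nat.sub_sub] using this

theorem Vset_mem (hi : i ∈ CC e A k []) {q : List S} (hq : GoodChain e A k i q)
    (hlen : q.length < k) : Vset e A k i q ∈ e := by
  have h := CC_of_goodChain e A k i hi q hq
  have hk : k - q.length = (k - q.length - 1) + 1 := by omega
  rw [hk] at h
  exact h

/-- A configuration: a reverse-chronological list of blocks with its list of products. -/
def Config (f : List S) (L : List (Finset ℕ)) (p : List S) : Prop :=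
  L.length ≤ k ∧ (∀ β ∈ L, β.Nonempty ∧ ∀ t ∈ β, t < f.length) ∧
  L.Pairwise (fun γ β => ∀ s ∈ β, ∀ t ∈ γ, s < t) ∧
  L.map (lProd f) = p.map WithOne.coe

theorem config_unique {f : List S} {L : List (Finset ℕ)} {p p' : List S}
    (h : Config k f L p) (h' : Config k f L p') : p = p' := by
  have hinj : Function.Injective (WithOne.coe : S → WithOne S) :=
    fun a b hab => WithOne.coe_inj.mp hab
  exact List.map_injective_iff.mpr hinj (h.2.2.2.symm.trans h'.2.2.2)


theorem lProd_congr {f g : List S} {α : Finset ℕ} (h : ∀ t ∈ α, f[t]? = g[t]?) :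
    lProd f α = lProd g α := by
  unfold lProd oListProd
  congr 1
  apply List.map_congr_left
  intro t ht
  rw [h t (Finset.mem_sort (α := ℕ) (· ≤ ·) |>.mp ht)]

theorem lProd_prefix {f g : List S} {α : Finset ℕ} (h : ∀ t ∈ α, t < f.length) :
    lProd (f ++ g) α = lProd f α :=
  lProd_congr (fun t ht => List.getElem?_append_left (h t ht))

theorem sort_snoc (α : Finset ℕ) (n : ℕ) (h : ∀ t ∈ α, t < n) :
    (insert n α).sort (· ≤ ·) = α.sort (· ≤ ·) ++ [n] := by
  have hn : n ∉ α := fun hc => lt_irrefl n (h n hc)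
  have hperm : ((insert n α).sort (· ≤ ·)).Perm (α.sort (· ≤ ·) ++ [n]) := by
    refine ((Finset.sort_perm_toList _ _).trans ((Finset.toList_insert hn).trans ?_))
    exact (List.Perm.cons n (Finset.sort_perm_toList _ _).symm).trans
      (List.perm_append_singleton n _).symm
  refine List.Perm.eq_of_pairwise' (Finset.pairwise_sort _ _) ?_ hperm
  · show List.Pairwise _ _
    rw [List.pairwise_append]
    refine ⟨Finset.pairwise_sort _ _, List.pairwise_singleton _ n, ?_⟩
    intro x hx b hb
    rw [List.mem_singleton] at hb
    subst hb
    exact le_of_lt (h x ((Finset.mem_sort (α := ℕ) (· ≤ ·)).mp hx))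

theorem lProd_insert (f : List S) (α : Finset ℕ) (n : ℕ) (h : ∀ t ∈ α, t < n) :
    lProd f (insert n α) =
      lProd f α * (f[n]?.elim (1 : WithOne S) (fun s => (s : WithOne S))) := by
  unfold lProd oListProd
  rw [sort_snoc α n h, List.map_append, List.prod_append, List.map_singleton,
    List.prod_singleton]

theorem lProd_singleton (f : List S) (n : ℕ) :
    lProd f {n} = (f[n]?.elim (1 : WithOne S) (fun s => (s : WithOne S))) := by
  unfold lProd oListProd
  rw [Finset.sort_singleton, List.map_singleton, List.prod_singleton]

theorem list_prod_coe : ∀ l : List (WithOne S), l ≠ [] → (∀ y ∈ l, ∃ x : S, y = ↑x) →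
    ∃ x : S, l.prod = ↑x
  | [], h, _ => absurd rfl h
  | [a], _, h2 => by
      obtain ⟨x, hx⟩ := h2 a (List.mem_singleton_self a)
      exact ⟨x, by simp [hx]⟩
  | a :: b :: l, _, h2 => by
      obtain ⟨xr, hxr⟩ := list_prod_coe (b :: l) (by simp) (fun y hy => h2 y (List.mem_cons_of_mem a hy))
      obtain ⟨xa, hxa⟩ := h2 a (List.mem_cons_self)
      exact ⟨xa * xr, by rw [List.prod_cons, hxa, hxr, ← WithOne.coe_mul]⟩

theorem lProd_coe (f : List S) (α : Finset ℕ) (hne : α.Nonempty)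
    (hlt : ∀ t ∈ α, t < f.length) : ∃ x : S, lProd f α = ↑x := by
  unfold lProd oListProd
  apply list_prod_coe
  · obtain ⟨a, ha⟩ := hne
    have : a ∈ α.sort (· ≤ ·) := (Finset.mem_sort _).mpr ha
    intro hc
    rw [List.map_eq_nil_iff] at hc
    rw [hc] at this
    simp at this
  · intro y hy
    rw [List.mem_map] at hy
    obtain ⟨t, ht, rfl⟩ := hy
    have ht' : t ∈ α := (Finset.mem_sort (α := ℕ) (· ≤ ·)).mp ht
    refine ⟨f[t]'(hlt t ht'), ?_⟩
    rw [List.getElem?_eq_getElem (hlt t ht')]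
    rfl


theorem finite_bounded_lists {X : Type*} {G : Set X} (hG : G.Finite) :
    ∀ k : ℕ, {l : List X | l.length ≤ k ∧ ∀ x ∈ l, x ∈ G}.Finite
  | 0 => (Set.finite_singleton ([] : List X)).subset (by
      rintro l ⟨h1, _⟩
      simp only [Set.mem_singleton_iff]
      exact List.length_eq_zero_iff.mp (Nat.le_zero.mp h1))
  | (k+1) => by
      have ih := finite_bounded_lists hG k
      apply Set.Finite.subset ((hG.image2 List.cons ih).insert [])
      rintro l ⟨h1, h2⟩
      cases l with
      | nil => exact Set.mem_insert _ _
      | cons a l =>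
        refine Set.mem_insert_iff.mpr (Or.inr ?_)
        exact Set.mem_image2_of_mem (h2 a (List.mem_cons_self))
          ⟨by simpa using h1, fun x hx => h2 x (List.mem_cons_of_mem a hx)⟩



theorem extend_mem (hid : e * e = e) (hi : i ∈ CC e A k []) (f : List S)
    (hf : ∀ L p, Config k f L p → GoodChain e A k i p) :
    {s : S | ∀ L p, Config k (f ++ [s]) L p → GoodChain e A k i p} ∈ e := by
  classical
  set n := f.length with hn
  -- the finite family of constraints
  set Cfgs : Set (List (Finset ℕ) × Finset ℕ) :=
    {c | c.1.length ≤ k ∧ (∀ γ ∈ c.1, γ ⊆ Finset.range n) ∧ c.2 ⊆ Finset.range n} with hCfgsdef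
  have hCfgs : Cfgs.Finite := by
    have h1 : {L : List (Finset ℕ) | L.length ≤ k ∧ ∀ γ ∈ L, γ ∈ ((Finset.range n).powerset : Finset (Finset ℕ))}.Finite :=
      finite_bounded_lists (Finset.finite_toSet _) k
    apply Set.Finite.subset (h1.prod (Finset.finite_toSet ((Finset.range n).powerset)))
    rintro ⟨L, β⟩ ⟨hl, hγ, hβ⟩
    exact ⟨⟨hl, fun γ hγ' => Finset.mem_powerset.mpr (hγ γ hγ')⟩, Finset.mem_powerset.mpr hβ⟩
  set W : List (Finset ℕ) × Finset ℕ → Set S := fun c =>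
    {s | ∀ q, Config k f c.1 q → c.1.length < k → s ∈ star e (Vset e A k i q)} ∩
    {s | ∀ q t, Config k f c.1 q → Config k f (c.2 :: c.1) (t :: q) →
      t * s ∈ star e (Vset e A k i q)} with hWdef
  have hW : ∀ c, W c ∈ e := by
    intro c
    apply Filter.inter_mem
    · by_cases h : ∃ q, Config k f c.1 q ∧ c.1.length < k
      · obtain ⟨q, hq, hlen⟩ := h
        have hVq : Vset e A k i q ∈ e := by
          have hql : q.length < k := by
            have := hq.2.2.2
            have hlq : q.length = c.1.length := by
              have h := congrArg List.length this; simp at h; omega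
            omega
          exact Vset_mem e A k i hi (hf _ _ hq) hql
        apply Filter.mem_of_superset (star_mem e hid hVq)
        intro s hs q' hq' _
        rwa [config_unique k hq' hq]
      · exact Filter.univ_mem' (fun s q hq hlen => absurd ⟨q, hq, hlen⟩ h)
    · by_cases h : ∃ q t, Config k f c.1 q ∧ Config k f (c.2 :: c.1) (t :: q)
      · obtain ⟨q, t, hq, htq⟩ := h
        have hg : GoodChain e A k i (t :: q) := hf _ _ htq
        obtain ⟨hgq, hlen, ht⟩ := hg
        apply Filter.mem_of_superset (mem_star_star e hid ht)
        intro s hs q' t' hq' htq'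
        have h1 : q' = q := config_unique k hq' hq
        have h2 : t' :: q' = t :: q := config_unique k htq' htq
        rw [h1]
        rw [h1] at h2
        have : t' = t := by injection h2
        rw [this]
        exact hs
      · exact Filter.univ_mem' (fun s q t hq htq => absurd ⟨q, t, hq, htq⟩ h)
  have hInter : (⋂ c ∈ Cfgs, W c) ∈ e := (Filter.biInter_mem hCfgs).mpr (fun c _ => hW c)
  apply Filter.mem_of_superset hInter
  intro s hs
  have hs' : ∀ c ∈ Cfgs, s ∈ W c := by
    intro c hc
    exact Set.mem_iInter₂.mp hs c hc
  intro L p hC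
  obtain ⟨hlenL, hblk, hpw, hmap⟩ := hC
  cases L with
  | nil =>
    have : p = [] := by
      have := congrArg List.length hmap; simp at this; exact (List.length_eq_zero_iff.mp this.symm)
    rw [this]; trivial
  | cons β M =>
    cases p with
    | nil => simp at hmap
    | cons x q =>
      rw [List.map_cons, List.map_cons] at hmap
      have hmapβ : lProd (f ++ [s]) β = WithOne.coe x := by injection hmap
      have hmapM : M.map (lProd (f ++ [s])) = q.map WithOne.coe := by injection hmap
      have hβne : β.Nonempty := (hblk β (List.mem_cons_self)).1
      have hβlt : ∀ t ∈ β, t < n + 1 := by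
        intro t ht
        have := (hblk β (List.mem_cons_self)).2 t ht
        simpa using this
      have hpw' := List.pairwise_cons.mp hpw
      have hMlt : ∀ γ ∈ M, ∀ t ∈ γ, t < n := by
        intro γ hγ t ht
        obtain ⟨u, hu⟩ := hβne
        have h1 : t < u := hpw'.1 γ hγ t ht u hu
        have h2 : u < n + 1 := hβlt u hu
        omega
      have hMmap : M.map (lProd f) = q.map WithOne.coe := by
        rw [← hmapM]
        exact List.map_congr_left (fun γ hγ => (lProd_prefix (hMlt γ hγ)).symm)
      have hlenq : q.length = M.length := by
        have h := congrArg List.length hMmap; simp at h; omega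
      have hconfM : Config k f M q :=
        ⟨by simp at hlenL; omega,
         fun γ hγ => ⟨(hblk γ (List.mem_cons_of_mem β hγ)).1, hMlt γ hγ⟩,
         hpw'.2, hMmap⟩
      have hgq : GoodChain e A k i q := hf _ _ hconfM
      have hqk : q.length < k := by simp at hlenL; omega
      by_cases hnβ : n ∈ β
      · -- the newest block contains the new position n
        set β' := β.erase n with hβ'def
        have hβ'lt : ∀ t ∈ β', t < n := by
          intro t ht
          rw [hβ'def, Finset.mem_erase] at ht
          have := hβlt t ht.2
          omega
        have hcfg : (M, β') ∈ Cfgs := by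
          refine ⟨?_, ?_, ?_⟩
          · show M.length ≤ k
            simp at hlenL; omega
          · intro γ hγ
            intro t ht
            exact Finset.mem_range.mpr (hMlt γ hγ t ht)
          · intro t ht
            exact Finset.mem_range.mpr (hβ'lt t ht)
        have hsW := hs' _ hcfg
        by_cases hβ'e : β' = ∅
        · -- β = {n}, new product is s itself
          have hβsing : β = {n} := by
            rcases (Finset.erase_eq_empty_iff β n).mp hβ'e with h | h
            · exact absurd h (Finset.nonempty_iff_ne_empty.mp hβne)
            · exact h
          have hxs : x = s := by
            have h1 : lProd (f ++ [s]) β = WithOne.coe s := by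
              rw [hβsing, lProd_singleton]
              have : (f ++ [s])[n]? = some s := by
                rw [hn]; simp
              rw [this]
              rfl
            have := h1.symm.trans hmapβ
            exact (WithOne.coe_inj.mp this).symm
          have hstar : s ∈ star e (Vset e A k i q) := hsW.1 q hconfM (by show M.length < k; omega)
          exact ⟨hgq, hqk, by rw [hxs]; exact hstar⟩
        · -- β = insert n β' with β' nonempty
          have hβ'ne : β'.Nonempty := Finset.nonempty_iff_ne_empty.mpr hβ'e
          obtain ⟨t, ht⟩ := lProd_coe f β' hβ'ne hβ'lt
          have hconfβ' : Config k f (β' :: M) (t :: q) := by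
            refine ⟨by simpa using hlenL, ?_, ?_, ?_⟩
            · intro γ hγ
              rcases List.mem_cons.mp hγ with h | h
              · subst h; exact ⟨hβ'ne, hβ'lt⟩
              · exact ⟨(hblk γ (List.mem_cons_of_mem β h)).1, hMlt γ h⟩
            · rw [List.pairwise_cons]
              refine ⟨?_, hpw'.2⟩
              intro γ hγ u hu v hv
              exact hpw'.1 γ hγ u hu v (Finset.mem_of_mem_erase hv)
            · rw [List.map_cons, List.map_cons, hMmap, ht]
          have hts : t * s ∈ star e (Vset e A k i q) := hsW.2 q t hconfM hconfβ'
          have hxts : x = t * s := by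
            have h1 : lProd (f ++ [s]) β = WithOne.coe (t * s) := by
              have hins : β = insert n β' := by
                rw [hβ'def, Finset.insert_erase hnβ]
              rw [hins, lProd_insert _ _ _ hβ'lt]
              have h2 : (f ++ [s])[n]? = some s := by rw [hn]; simp
              rw [h2]
              have h3 : lProd (f ++ [s]) β' = lProd f β' := lProd_prefix hβ'lt
              rw [h3, ht]
              rfl
            exact WithOne.coe_inj.mp (hmapβ.symm.trans h1)
          exact ⟨hgq, hqk, by rw [hxts]; exact hts⟩
      · -- no block contains n : an old configuration
        have hβlt' : ∀ t ∈ β, t < n := by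
          intro t ht
          have := hβlt t ht
          rcases Nat.lt_succ_iff_lt_or_eq.mp this with h | h
          · exact h
          · exact absurd (h ▸ ht) hnβ
        have hmapβ' : lProd f β = WithOne.coe x := by
          rw [← hmapβ]; exact (lProd_prefix hβlt').symm
        have hconf : Config k f (β :: M) (x :: q) := by
          refine ⟨hlenL, ?_, hpw, ?_⟩
          · intro γ hγ
            rcases List.mem_cons.mp hγ with h | h
            · subst h; exact ⟨hβne, hβlt'⟩
            · exact ⟨(hblk γ (List.mem_cons_of_mem β h)).1, hMlt γ h⟩
          · rw [List.map_cons, List.map_cons, hMmap, hmapβ']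
        exact hf _ _ hconf

end TRaux

/-- Let `S` be a semigroup with a non-principal idempotent ultrafilter `e`, let
`k, r ≥ 1` and `[S]^k = A 0 ∪ … ∪ A (r-1)`.  Then there are `i` and a tree
`T ⊆ S^{<ω}` such that for all `f ∈ T` and all `α 1 < … < α k ⊆ dom f` in `P_f(ω)`:
(1) `T(f) ∈ e`, and (2) `{∏_{t∈α 1} f(t), …, ∏_{t∈α k} f(t)} ∈ A i`. -/
theorem tree_ramsey_lemma
    {S : Type*} [Semigroup S] [DecidableEq S]
    (e : Ultrafilter S) (hnp : ∀ s : S, e ≠ pure s) (hid : e * e = e)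
    (k r : ℕ) (hk : 1 ≤ k) (hr : 1 ≤ r)
    (A : Fin r → Set (Finset S))
    (hA : {E : Finset S | E.card = k} = ⋃ i, A i) :
    ∃ (i : Fin r) (T : Set (List S)), IsTree T ∧
      ∀ f ∈ T,
        treeSucc T f ∈ e ∧
        ∀ α : Fin k → Finset ℕ,
          (∀ j, (α j).Nonempty) →
          (∀ j, ∀ t ∈ α j, t < f.length) →
          (∀ j j' : Fin k, j < j' → ∀ s ∈ α j, ∀ t ∈ α j', s < t) →
          ∃ p : Fin k → S,
            (∀ j, (p j : WithOne S) = lProd f (α j)) ∧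
            Finset.image p Finset.univ ∈ A i := by
  classical
  obtain ⟨i, hi⟩ := TRaux.CC_nonempty e A hA hnp k [] List.nodup_nil (by simp)
  set P : List S → Prop :=
    fun f => ∀ L p, TRaux.Config k f L p → TRaux.GoodChain e A k i p with hP
  refine ⟨i, {f | P f}, ⟨⟨[], ?_⟩, ?_⟩, ?_⟩
  · -- the empty sequence is in the tree
    intro L p hC
    obtain ⟨_, hblk, _, hmap⟩ := hC
    cases L with
    | nil =>
      have hp0 : p = [] := by
        have h := congrArg List.length hmap; simp at h
        exact List.length_eq_zero_iff.mp h.symm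
      rw [hp0]; trivial
    | cons β M =>
      obtain ⟨u, hu⟩ := (hblk β (List.mem_cons_self)).1
      have := (hblk β (List.mem_cons_self)).2 u hu
      simp at this
  · -- closed under prefixes
    rintro g hg f ⟨h, rfl⟩
    intro L p hC
    obtain ⟨h1, hblk, h3, hmap⟩ := hC
    refine hg L p ⟨h1, ?_, h3, ?_⟩
    · intro β hβ
      refine ⟨(hblk β hβ).1, fun t ht => ?_⟩
      have := (hblk β hβ).2 t ht
      simp only [List.length_append]
      omega
    · rw [← hmap]
      exact List.map_congr_left (fun β hβ => TRaux.lProd_prefix ((hblk β hβ).2))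
  · intro f hf
    constructor
    · -- the successor set is large
      exact TRaux.extend_mem e A k i hid hi f hf
    · -- products of blocks land in `A i`
      intro α hne hlt hinc
      have hpj : ∀ j, ∃ x : S, lProd f (α j) = ↑x :=
        fun j => TRaux.lProd_coe f (α j) (hne j) (hlt j)
      choose p hp using hpj
      refine ⟨p, fun j => (hp j).symm, ?_⟩
      have hC : TRaux.Config k f (List.ofFn α).reverse (List.ofFn p).reverse := by
        refine ⟨by simp, ?_, ?_, ?_⟩
        · intro β hβ
          simp only [List.mem_reverse, List.mem_ofFn, Set.mem_range] at hβ
          obtain ⟨j, rfl⟩ := hβ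
          exact ⟨hne j, hlt j⟩
        · rw [List.pairwise_reverse, List.pairwise_ofFn]
          intro j j' hjj'
          exact fun s hs t ht => hinc j j' hjj' s hs t ht
        · simp only [List.map_reverse, List.map_ofFn]
          refine congrArg List.reverse (congrArg List.ofFn ?_)
          funext j
          exact hp j
      have hg := hf _ _ hC
      have hfin : i ∈ TRaux.CC e A 0 ((List.ofFn p).reverse) := by
        have h := TRaux.CC_of_goodChain e A k i hi _ hg
        have hlen : ((List.ofFn p).reverse).length = k := by simp
        rw [hlen, Nat.sub_self] at h
        exact h
      obtain ⟨hnd, hmem⟩ := hfin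
      have himg : ((List.ofFn p).reverse).toFinset = Finset.image p Finset.univ := by
        ext x
        simp [List.mem_ofFn]
      rwa [himg] at hmem
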